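/- arXiv:0705.0584 — 5 statements merged into one kernel-verified Lean document; each statement's English description precedes it below -/
import Mathlib

section
/- There is at most one homeomorphism Φ of [0,1] satisfying T = Φ∘F∘Φ^{-1}, where F is the Farey map and T is the tent map. -/
noncomputable def fareyMap (x : ℝ) : ℝ := if x < 1/2 then x / (1 - x) else (1 - x) / x

noncomputable def tentMap (x : ℝ) : ℝ := if x < 1/2 then 2 * x else 2 - 2 * x

noncomputable def fareyMapI (x : Set.Icc (0:ℝ) 1) : Set.Icc (0:ℝ) 1 :=
  Set.projIcc 0 1 (by norm_num) (fareyMap x)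

noncomputable def tentMapI (x : Set.Icc (0:ℝ) 1) : Set.Icc (0:ℝ) 1 :=
  Set.projIcc 0 1 (by norm_num) (tentMap x)


lemma tentMap_mem (x : ℝ) (hx : x ∈ Set.Icc (0:ℝ) 1) : tentMap x ∈ Set.Icc (0:ℝ) 1 := by
  obtain ⟨h0, h1⟩ := hx
  unfold tentMap
  split <;> constructor <;> linarith

lemma tentMapI_coe (x : Set.Icc (0:ℝ) 1) : ((tentMapI x : Set.Icc (0:ℝ) 1) : ℝ) = tentMap x := by
  rw [tentMapI, Set.projIcc_of_mem _ (tentMap_mem x x.2)]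

instance : Fact ((0:ℝ) ≤ 1) := ⟨by norm_num⟩

lemma bot_coe : ((⊥ : Set.Icc (0:ℝ) 1) : ℝ) = 0 := rfl
lemma top_coe : ((⊤ : Set.Icc (0:ℝ) 1) : ℝ) = 1 := rfl

lemma tentMapI_bot : tentMapI ⊥ = ⊥ := by
  apply Subtype.ext; rw [tentMapI_coe, bot_coe]; norm_num [tentMap]
lemma tentMapI_top : tentMapI ⊤ = ⊥ := by
  apply Subtype.ext; rw [tentMapI_coe, top_coe, bot_coe]; norm_num [tentMap]

lemma fiber_finite (y : Set.Icc (0:ℝ) 1) : (tentMapI ⁻¹' {y}).Finite := by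
  have h : tentMapI ⁻¹' {y} ⊆ Subtype.val ⁻¹' {(y:ℝ)/2, 1 - (y:ℝ)/2} := by
    intro x hx
    have hxy : tentMap (x:ℝ) = (y:ℝ) := by
      rw [← tentMapI_coe]; exact congrArg _ hx
    simp only [Set.mem_preimage, Set.mem_insert_iff, Set.mem_singleton_iff]
    unfold tentMap at hxy
    split at hxy
    · left; linarith
    · right; linarith
  exact Set.Finite.subset (Set.Finite.preimage Subtype.val_injective.injOn
    (Set.toFinite _)) h

lemma preimage_finite {s : Set (Set.Icc (0:ℝ) 1)} (hs : s.Finite) :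
    (tentMapI ⁻¹' s).Finite := by
  have : tentMapI ⁻¹' s = ⋃ y ∈ s, tentMapI ⁻¹' {y} := by
    ext x; simp
  rw [this]
  exact Set.Finite.biUnion hs fun y _ => fiber_finite y

def levelSet (n : ℕ) : Set (Set.Icc (0:ℝ) 1) := (tentMapI^[n]) ⁻¹' {⊥}

lemma levelSet_finite (n : ℕ) : (levelSet n).Finite := by
  induction n with
  | zero => exact Set.Finite.subset (Set.finite_singleton ⊥) (by simp [levelSet])
  | succ n ih =>
      have : levelSet (n+1) = tentMapI ⁻¹' levelSet n := by
        ext x; simp [levelSet, Function.iterate_succ_apply]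
      rw [this]; exact preimage_finite ih

lemma dyadic_levelSet : ∀ m : ℕ, ∀ x : Set.Icc (0:ℝ) 1, (∃ k : ℕ, (x:ℝ) = k / 2^m) →
    x ∈ levelSet (m+1) := by
  intro m
  induction m with
  | zero =>
      rintro x ⟨k, hk⟩
      simp only [pow_zero, div_one] at hk
      have hx1 : (x:ℝ) ≤ 1 := x.2.2
      have hx0 : (0:ℝ) ≤ x := x.2.1
      have hk1 : k ≤ 1 := by
        by_contra hc
        push_neg at hc
        have : (2:ℝ) ≤ (k:ℝ) := by exact_mod_cast hc
        linarith [hk ▸ hx1]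
      interval_cases k
      · have : x = ⊥ := Subtype.ext (by rw [bot_coe, hk]; norm_num)
        simp [levelSet, this, tentMapI_bot]
      · have : x = ⊤ := Subtype.ext (by rw [top_coe, hk]; norm_num)
        simp [levelSet, this, tentMapI_top]
  | succ m ih =>
      rintro x ⟨k, hk⟩
      have h2m : (0:ℝ) < 2^(m+1) := by positivity
      have hk2 : (k:ℝ) ≤ 2^(m+1) := by
        have := x.2.2
        rw [hk, div_le_one h2m] at this; exact this
      have hstep : ∃ k' : ℕ, ((tentMapI x : Set.Icc (0:ℝ) 1) : ℝ) = k' / 2^m := by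
        rw [tentMapI_coe]
        unfold tentMap
        split
        · exact ⟨k, by rw [hk]; ring⟩
        · refine ⟨2^(m+1) - k, ?_⟩
          have hkn : k ≤ 2^(m+1) := by exact_mod_cast hk2
          push_cast [Nat.cast_sub hkn]
          rw [hk]
          field_simp
          ring
      have := ih (tentMapI x) hstep
      simpa [levelSet, Function.iterate_succ_apply] using this

lemma dense_levelSets : Dense (⋃ n, levelSet n) := by
  rw [Metric.dense_iff]
  intro x r hr
  obtain ⟨m, hm⟩ : ∃ m : ℕ, (1/2:ℝ)^m < r := exists_pow_lt_of_lt_one hr (by norm_num)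
  have h2m : (0:ℝ) < 2^m := by positivity
  set k : ℕ := ⌊(x:ℝ) * 2^m⌋₊ with hkdef
  have hx0 : (0:ℝ) ≤ x := x.2.1
  have hx1 : (x:ℝ) ≤ 1 := x.2.2
  have hk_le : (k:ℝ) ≤ (x:ℝ) * 2^m := Nat.floor_le (by positivity)
  have hk_lt : (x:ℝ) * 2^m < k + 1 := Nat.lt_floor_add_one _
  have hmem : (k:ℝ)/2^m ∈ Set.Icc (0:ℝ) 1 := by
    constructor
    · positivity
    · rw [div_le_one h2m]
      calc (k:ℝ) ≤ (x:ℝ) * 2^m := hk_le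
        _ ≤ 1 * 2^m := by nlinarith
        _ = 2^m := one_mul _
  refine ⟨⟨(k:ℝ)/2^m, hmem⟩, ?_, ?_⟩
  · rw [Metric.mem_ball, Subtype.dist_eq, Real.dist_eq]
    have hm' : (1:ℝ)/2^m < r := by rwa [div_pow, one_pow] at hm
    have h1 : (k:ℝ)/2^m ≤ x := by rw [div_le_iff₀ h2m]; linarith
    have h2 : (x:ℝ) < (k:ℝ)/2^m + 1/2^m := by
      rw [← add_div, lt_div_iff₀ h2m]
      linarith
    have habs : |((k:ℝ)/2^m) - (x:ℝ)| ≤ 1/2^m := by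
      rw [abs_le]
      have hpos : (0:ℝ) ≤ 1/2^m := by positivity
      constructor <;> linarith
    linarith
  · exact Set.mem_iUnion.2 ⟨m+1, dyadic_levelSet m _ ⟨k, rfl⟩⟩

lemma strictMono_fixes_finset {α : Type*} [LinearOrder α] {f : α → α} (hf : StrictMono f) :
    ∀ t : Finset α, (∀ x ∈ t, f x ∈ t) → ∀ x ∈ t, f x = x := by
  intro t
  induction t using Finset.strongInduction with
  | _ t ih =>
    intro hmaps x hx
    have hne : t.Nonempty := ⟨x, hx⟩
    set m := t.min' hne with hm
    have himg : t.image f = t := by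
      apply Finset.eq_of_subset_of_card_le
      · intro y hy
        obtain ⟨z, hz, rfl⟩ := Finset.mem_image.1 hy
        exact hmaps z hz
      · rw [Finset.card_image_of_injective _ hf.injective]
    have hfm : f m = m := by
      have h1 : m ≤ f m := t.min'_le _ (hmaps m (t.min'_mem hne))
      obtain ⟨y, hy, hfy⟩ : ∃ y ∈ t, f y = m := by
        have : m ∈ t.image f := by rw [himg]; exact t.min'_mem hne
        simpa using Finset.mem_image.1 this
      have h2 : f m ≤ m := by
        calc f m ≤ f y := hf.le_iff_le.2 (t.min'_le _ hy)
          _ = m := hfy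
      exact le_antisymm h2 h1
    rcases eq_or_ne x m with rfl | hxm
    · exact hfm
    · have hx' : x ∈ t.erase m := Finset.mem_erase.2 ⟨hxm, hx⟩
      refine ih (t.erase m) (Finset.erase_ssubset (t.min'_mem hne)) ?_ x hx'
      intro z hz
      obtain ⟨hzm, hzt⟩ := Finset.mem_erase.1 hz
      refine Finset.mem_erase.2 ⟨?_, hmaps z hzt⟩
      intro hc
      exact hzm (hf.injective (hc.trans hfm.symm))

lemma bot_ne_top' : (⊥ : Set.Icc (0:ℝ) 1) ≠ ⊤ := by
  intro h
  have := congrArg Subtype.val h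
  rw [bot_coe, top_coe] at this
  norm_num at this

lemma commuting_eq_id (K : Set.Icc (0:ℝ) 1 → Set.Icc (0:ℝ) 1)
    (hc : Continuous K) (hinj : Function.Injective K) (hsurj : Function.Surjective K)
    (hK : ∀ x, tentMapI (K x) = K (tentMapI x)) : K = id := by
  rcases hc.strictMono_of_inj_boundedOrder' hinj with hmono | hanti
  · -- monotone case : K ⊥ = ⊥
    have hbot : K ⊥ = ⊥ := by
      obtain ⟨z, hz⟩ := hsurj ⊥
      have : K ⊥ ≤ K z := hmono.monotone bot_le
      rw [hz] at this
      exact le_bot_iff.1 this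
    have hsemi : Function.Semiconj K tentMapI tentMapI := fun x => (hK x).symm
    have hmaps : ∀ n, ∀ x ∈ levelSet n, K x ∈ levelSet n := by
      intro n x hx
      have hiter := (hsemi.iterate_right n).eq x
      simp only [levelSet, Set.mem_preimage, Set.mem_singleton_iff] at hx ⊢
      rw [← hiter, hx, hbot]
    have hfix : ∀ n, ∀ x ∈ levelSet n, K x = x := by
      intro n x hx
      have hfin := levelSet_finite n
      refine strictMono_fixes_finset hmono hfin.toFinset ?_ x (hfin.mem_toFinset.2 hx)
      intro z hz
      exact hfin.mem_toFinset.2 (hmaps n z (hfin.mem_toFinset.1 hz))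
    apply Continuous.ext_on dense_levelSets hc continuous_id
    intro x hx
    obtain ⟨n, hn⟩ := Set.mem_iUnion.1 hx
    exact hfix n x hn
  · -- antitone case : impossible
    exfalso
    have htop : K ⊥ = ⊤ := by
      obtain ⟨z, hz⟩ := hsurj ⊤
      have : K z ≤ K ⊥ := hanti.antitone bot_le
      rw [hz] at this
      exact top_le_iff.1 this
    have h1 := hK ⊥
    rw [tentMapI_bot, htop, tentMapI_top] at h1
    exact bot_ne_top' h1

theorem conjugating_homeo_unique
    (Φ Ψ : Set.Icc (0:ℝ) 1 ≃ₜ Set.Icc (0:ℝ) 1)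
    (hΦ : ∀ x, tentMapI (Φ x) = Φ (fareyMapI x))
    (hΨ : ∀ x, tentMapI (Ψ x) = Ψ (fareyMapI x)) :
    Φ = Ψ := by
  set K : Set.Icc (0:ℝ) 1 → Set.Icc (0:ℝ) 1 := fun x => Ψ (Φ.symm x) with hKdef
  have hsemiK : ∀ x, tentMapI (K x) = K (tentMapI x) := by
    intro x
    have h1 : fareyMapI (Φ.symm x) = Φ.symm (tentMapI x) := by
      have := hΦ (Φ.symm x)
      rw [Φ.apply_symm_apply] at this
      have h2 := congrArg Φ.symm this.symm
      rwa [Φ.symm_apply_apply] at h2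
    calc tentMapI (K x) = Ψ (fareyMapI (Φ.symm x)) := hΨ (Φ.symm x)
      _ = K (tentMapI x) := by rw [h1]
  have hKid : K = id := by
    apply commuting_eq_id K
    · exact Ψ.continuous.comp Φ.symm.continuous
    · exact Ψ.injective.comp Φ.symm.injective
    · exact Ψ.surjective.comp Φ.symm.surjective
    · exact hsemiK
  ext x
  have := congrFun hKid (Φ x)
  simp only [hKdef, Φ.symm_apply_apply, id] at this
  exact congrArg Subtype.val this.symm
end

section
/- Let Q_0 be the n×n integer matrix with (Q_0)_{ij} = 1 if ij=11 or ij=1n or i=j+1, (Q_0)_{ij} = -1 if i≥2 and j=n, and 0 otherwise. Then Q_0^n = 2·Id, where Id is the n×n identity matrix. -/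
/-- The matrix Q₀ (indices zero-based: entry (i,j) corresponds to the paper's (i+1,j+1)). -/
def Qzero (n : ℕ) : Matrix (Fin n) (Fin n) ℤ := fun i j =>
  if (i.val = 0 ∧ j.val = 0) ∨ (i.val = 0 ∧ j.val = n - 1) ∨ i.val = j.val + 1 then 1
  else if 1 ≤ i.val ∧ j.val = n - 1 then -1
  else 0

/-- Explicit formula for entries of `Qzero n ^ k` (valid for `1 ≤ k ≤ n-1`). -/
def fAux (n k i j : ℕ) : ℤ :=
  if j = 0 then (if i ≤ k then 1 else 0)
  else if j + k ≤ n - 1 then (if i = j + k then 1 else 0)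
  else if j + k = n then (if i = 0 then 1 else -1)
  else (if i + n = j + k then 2 else 0)

lemma Qzero_eq (n : ℕ) (hn : 2 ≤ n) (i l : Fin n) :
    Qzero n i l = (if l.val = i.val - 1 then 1 else 0)
      + (if l.val = n - 1 then (if i.val = 0 then (1:ℤ) else -1) else 0) := by
  unfold Qzero
  have hi := i.isLt; have hl := l.isLt
  split_ifs <;> omega

lemma mul_apply_Q (n : ℕ) (hn : 2 ≤ n) (M : Matrix (Fin n) (Fin n) ℤ) (i j : Fin n) :
    (Qzero n * M) i j = M ⟨i.val - 1, by omega⟩ j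
      + (if i.val = 0 then 1 else -1) * M ⟨n - 1, by omega⟩ j := by
  rw [Matrix.mul_apply]
  have key : ∀ l : Fin n, Qzero n i l * M l j =
      (if l = (⟨i.val - 1, by omega⟩ : Fin n) then M (⟨i.val - 1, by omega⟩ : Fin n) j else 0)
      + (if l = (⟨n - 1, by omega⟩ : Fin n) then
          (if i.val = 0 then 1 else -1) * M (⟨n - 1, by omega⟩ : Fin n) j else 0) := by
    intro l
    rw [Qzero_eq n hn, add_mul]
    congr 1
    · rcases eq_or_ne l (⟨i.val - 1, by omega⟩ : Fin n) with h | h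
      · subst h; simp
      · rw [if_neg (by simpa [Fin.ext_iff] using h), if_neg h, zero_mul]
    · rcases eq_or_ne l (⟨n - 1, by omega⟩ : Fin n) with h | h
      · subst h; simp
      · rw [if_neg (by simpa [Fin.ext_iff] using h), if_neg h, zero_mul]
  simp_rw [key]
  rw [Finset.sum_add_distrib, Finset.sum_ite_eq' Finset.univ, Finset.sum_ite_eq' Finset.univ]
  simp

theorem Qzero_pow_n (n : ℕ) (hn : 2 ≤ n) :
    Qzero n ^ n = (2 : ℤ) • (1 : Matrix (Fin n) (Fin n) ℤ) := by
  have key : ∀ k, 1 ≤ k → k ≤ n - 1 →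
      Qzero n ^ k = fun i j : Fin n => fAux n k i.val j.val := by
    intro k h1 h2
    induction k with
    | zero => omega
    | succ m ih =>
      rcases Nat.eq_or_lt_of_le h1 with h | h
      · have hm : m = 0 := by omega
        subst hm
        ext i j
        have hi := i.isLt; have hj := j.isLt
        simp only [zero_add, pow_one, Qzero, fAux]
        split_ifs <;> omega
      · have hm1 : 1 ≤ m := by omega
        have hm2 : m ≤ n - 1 := by omega
        rw [pow_succ', ih hm1 hm2]
        ext i j
        erw [mul_apply_Q n hn]
        have hi := i.isLt; have hj := j.isLt
        simp only [fAux]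
        split_ifs <;> omega
  obtain ⟨m, rfl⟩ : ∃ m, n = m + 1 := ⟨n - 1, by omega⟩
  rw [pow_succ', key m (by omega) (by omega)]
  ext i j
  erw [mul_apply_Q (m + 1) hn]
  have hi := i.isLt; have hj := j.isLt
  simp only [fAux, Matrix.smul_apply, Matrix.one_apply, Fin.ext_iff, smul_ite, smul_zero,
    smul_eq_mul, mul_one]
  split_ifs <;> omega
end

section
/- Let Q_0 be as above, D the n×n diagonal matrix with diagonal entries (-1,1,...,1), and Q_1 = D·Q_0. Then for every t ≥ 1 and every sequence a_0,...,a_{t-1} ∈ {0,1}, there exists X ∈ GL_n(ℤ) such that Q_{a_{t-1}}···Q_{a_0} = X·Q_0^t (i.e., the two products have the same row Hermite Normal Form). -/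
/-- The diagonal matrix D = diag(-1,1,…,1). -/
def Dmat (n : ℕ) : Matrix (Fin n) (Fin n) ℤ :=
  Matrix.diagonal (fun i => if i.val = 0 then -1 else 1)

/-- Q₁ = D·Q₀. -/
def Qone (n : ℕ) : Matrix (Fin n) (Fin n) ℤ := Dmat n * Qzero n

/- Auxiliary definitions: V m = 1 - u m * w m, the conjugates of D by powers of Q₀. -/

def uvec (n m : ℕ) : Matrix (Fin n) (Fin 1) ℤ := fun i _ => if (i : ℕ) ≤ m then 1 else 0

def wvec (n m : ℕ) : Matrix (Fin 1) (Fin n) ℤ := fun _ j =>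
  (if (j : ℕ) = 0 then 1 else 0) + (if (j : ℕ) = m then 1 else 0)

def Vmat (n m : ℕ) : Matrix (Fin n) (Fin n) ℤ := 1 - uvec n m * wvec n m

lemma sum_delta (n c : ℕ) (hc : c < n) (f : Fin n → ℤ) :
    (∑ k : Fin n, if (k : ℕ) = c then f k else 0) = f ⟨c, hc⟩ := by
  rw [Finset.sum_eq_single (⟨c, hc⟩ : Fin n)]
  · simp
  · intro b _ hb
    rw [if_neg]
    exact fun h => hb (Fin.ext h)
  · intro h
    exact absurd (Finset.mem_univ _) h

lemma Qzero_row_zero (n : ℕ) (hn : 2 ≤ n) {i : Fin n} (hi : (i : ℕ) = 0) (k : Fin n) :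
    Qzero n i k = (if (k : ℕ) = 0 then 1 else 0) + (if (k : ℕ) = n - 1 then 1 else 0) := by
  have hk := k.isLt
  simp only [Qzero]
  split_ifs <;> omega

lemma Qzero_row_pos (n : ℕ) {i : Fin n} (hi : 1 ≤ (i : ℕ)) (k : Fin n) :
    Qzero n i k = (if (k : ℕ) = (i : ℕ) - 1 then 1 else 0) +
      (if (k : ℕ) = n - 1 then -1 else 0) := by
  have hk := k.isLt
  have hi' := i.isLt
  simp only [Qzero]
  split_ifs <;> omega

lemma Q_mul_u (n : ℕ) (hn : 2 ≤ n) (m : ℕ) (hm : m + 1 < n) :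
    Qzero n * uvec n m = uvec n (m + 1) := by
  ext i j
  rw [Matrix.mul_apply]
  rcases Nat.eq_zero_or_pos (i : ℕ) with hi | hi
  · simp only [Qzero_row_zero n hn hi, uvec, add_mul, ite_mul, one_mul, zero_mul]
    rw [Finset.sum_add_distrib, sum_delta n 0 (by omega), sum_delta n (n - 1) (by omega)]
    simp only
    split_ifs <;> omega
  · simp only [Qzero_row_pos n hi, uvec, add_mul, ite_mul, one_mul, zero_mul, neg_mul]
    rw [Finset.sum_add_distrib, sum_delta n ((i : ℕ) - 1) (by omega),
      sum_delta n (n - 1) (by omega)]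
    simp only
    split_ifs <;> omega

lemma Q_mul_u_last (n : ℕ) (hn : 2 ≤ n) :
    Qzero n * uvec n (n - 1) = (2 : ℤ) • uvec n 0 := by
  ext i j
  rw [Matrix.mul_apply]
  rcases Nat.eq_zero_or_pos (i : ℕ) with hi | hi
  · simp only [Qzero_row_zero n hn hi, uvec, add_mul, ite_mul, one_mul, zero_mul,
      Matrix.smul_apply, smul_ite, smul_eq_mul]
    rw [Finset.sum_add_distrib, sum_delta n 0 (by omega), sum_delta n (n - 1) (by omega)]
    simp only
    split_ifs <;> omega
  · simp only [Qzero_row_pos n hi, uvec, add_mul, ite_mul, one_mul, zero_mul, neg_mul,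
      Matrix.smul_apply, smul_ite, smul_eq_mul]
    have hi' := i.isLt
    rw [Finset.sum_add_distrib, sum_delta n ((i : ℕ) - 1) (by omega),
      sum_delta n (n - 1) (by omega)]
    simp only
    split_ifs <;> omega

lemma w_mul_Q (n : ℕ) (hn : 2 ≤ n) (m : ℕ) (hm : m + 1 < n) :
    wvec n (m + 1) * Qzero n = wvec n m := by
  ext i j
  rw [Matrix.mul_apply]
  simp only [wvec, add_mul, ite_mul, one_mul, zero_mul]
  rw [Finset.sum_add_distrib, sum_delta n 0 (by omega) (fun k => Qzero n k j),
    sum_delta n (m + 1) (by omega) (fun k => Qzero n k j)]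
  rw [Qzero_row_zero n hn rfl j, Qzero_row_pos n (by simp) j]
  have hj := j.isLt
  simp only
  split_ifs <;> omega

lemma w0_mul_Q (n : ℕ) (hn : 2 ≤ n) :
    wvec n 0 * Qzero n = (2 : ℤ) • wvec n (n - 1) := by
  ext i j
  rw [Matrix.mul_apply]
  simp only [wvec, add_mul, ite_mul, one_mul, zero_mul, Matrix.smul_apply, smul_add,
    smul_ite, smul_eq_mul]
  rw [Finset.sum_add_distrib, sum_delta n 0 (by omega) (fun k => Qzero n k j)]
  rw [Qzero_row_zero n hn rfl j]
  have hj := j.isLt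
  split_ifs <;> omega

lemma w_mul_u (n m : ℕ) (hm : m < n) :
    wvec n m * uvec n m = (2 : ℤ) • (1 : Matrix (Fin 1) (Fin 1) ℤ) := by
  ext i j
  rw [Matrix.mul_apply]
  simp only [wvec, uvec, add_mul, ite_mul, one_mul, zero_mul]
  rw [Finset.sum_add_distrib, sum_delta n 0 (by omega), sum_delta n m hm]
  have : i = j := Subsingleton.elim i j
  subst this
  simp [Matrix.one_apply]

lemma V_mul_V (n m : ℕ) (hm : m < n) : Vmat n m * Vmat n m = 1 := by
  have hU : (uvec n m * wvec n m) * (uvec n m * wvec n m)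
      = (2 : ℤ) • (uvec n m * wvec n m) := by
    rw [Matrix.mul_assoc, ← Matrix.mul_assoc (wvec n m), w_mul_u n m hm, Matrix.smul_mul,
      Matrix.one_mul, Matrix.mul_smul]
  have expand : Vmat n m * Vmat n m
      = 1 - uvec n m * wvec n m - uvec n m * wvec n m
        + (uvec n m * wvec n m) * (uvec n m * wvec n m) := by
    simp only [Vmat]
    noncomm_ring
  rw [expand, hU]
  have h2 : (2 : ℤ) • (uvec n m * wvec n m)
      = uvec n m * wvec n m + uvec n m * wvec n m := two_smul _ _
  rw [h2]
  abel

lemma Q_mul_V (n : ℕ) (hn : 2 ≤ n) (m : ℕ) (hm : m < n) :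
    Qzero n * Vmat n m = Vmat n ((m + 1) % n) * Qzero n := by
  by_cases h : m + 1 < n
  · rw [Nat.mod_eq_of_lt h]
    simp only [Vmat, Matrix.mul_sub, Matrix.sub_mul, mul_one, one_mul]
    rw [← Matrix.mul_assoc, Q_mul_u n hn m h, Matrix.mul_assoc, w_mul_Q n hn m h]
  · have hm1 : m + 1 = n := by omega
    have hmn : m = n - 1 := by omega
    rw [hm1, Nat.mod_self]
    simp only [Vmat, Matrix.mul_sub, Matrix.sub_mul, mul_one, one_mul]
    rw [hmn, ← Matrix.mul_assoc, Q_mul_u_last n hn, Matrix.mul_assoc, w0_mul_Q n hn,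
      Matrix.smul_mul, Matrix.mul_smul]

lemma D_eq_V (n : ℕ) : Dmat n = Vmat n 0 := by
  ext i j
  simp only [Dmat, Vmat, uvec, wvec, Matrix.diagonal_apply, Matrix.sub_apply,
    Matrix.one_apply, Matrix.mul_apply, Fin.sum_univ_one]
  rcases eq_or_ne i j with h | h
  · subst h
    simp only [if_pos rfl]
    split_ifs <;> omega
  · rw [if_neg h, if_neg h]
    have : (i : ℕ) ≠ (j : ℕ) ∨ True := by tauto
    have hij : ¬((i : ℕ) = (j : ℕ)) := fun hh => h (Fin.ext hh)
    split_ifs <;> omega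

lemma Qone_eq (n : ℕ) : Qone n = Vmat n 0 * Qzero n := by
  rw [Qone, D_eq_V]

def genSet (n : ℕ) : Set (Matrix (Fin n) (Fin n) ℤ) :=
  {M | ∃ m, m < n ∧ M = Vmat n m}

lemma push_lemma (n : ℕ) (hn : 2 ≤ n) {X : Matrix (Fin n) (Fin n) ℤ}
    (hX : X ∈ Submonoid.closure (genSet n)) :
    ∃ Y ∈ Submonoid.closure (genSet n), Qzero n * X = Y * Qzero n := by
  induction hX using Submonoid.closure_induction with
  | mem x hx =>
      obtain ⟨m, hm, rfl⟩ := hx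
      exact ⟨Vmat n ((m + 1) % n), Submonoid.subset_closure
        ⟨(m + 1) % n, Nat.mod_lt _ (by omega), rfl⟩, Q_mul_V n hn m hm⟩
  | one => exact ⟨1, one_mem _, by simp⟩
  | mul x y hx hy ihx ihy =>
      obtain ⟨Y₁, hY₁, h1⟩ := ihx
      obtain ⟨Y₂, hY₂, h2⟩ := ihy
      exact ⟨Y₁ * Y₂, mul_mem hY₁ hY₂, by rw [← mul_assoc, h1, mul_assoc, h2, ← mul_assoc]⟩

lemma unit_lemma (n : ℕ) {X : Matrix (Fin n) (Fin n) ℤ}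
    (hX : X ∈ Submonoid.closure (genSet n)) : IsUnit X := by
  induction hX using Submonoid.closure_induction with
  | mem x hx =>
      obtain ⟨m, hm, rfl⟩ := hx
      exact ⟨⟨Vmat n m, Vmat n m, V_mul_V n m hm, V_mul_V n m hm⟩, rfl⟩
  | one => exact isUnit_one
  | mul x y hx hy ihx ihy => exact ihx.mul ihy

lemma key_lemma (n : ℕ) (hn : 2 ≤ n) (a : ℕ → Bool) (t : ℕ) :
    ∃ X ∈ Submonoid.closure (genSet n),
      (List.ofFn (fun i : Fin t => if a i.val then Qone n else Qzero n)).reverse.prod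
        = X * Qzero n ^ t := by
  induction t with
  | zero => exact ⟨1, one_mem _, by simp⟩
  | succ t ih =>
      obtain ⟨X, hX, hP⟩ := ih
      obtain ⟨Y, hY, hQX⟩ := push_lemma n hn hX
      rw [List.ofFn_succ', List.concat_eq_append, List.reverse_append, List.reverse_singleton,
        List.singleton_append, List.prod_cons]
      have hcast : (List.ofFn fun i : Fin t =>
          if a ((Fin.castSucc i) : Fin (t+1)).val then Qone n else Qzero n).reverse.prod
          = X * Qzero n ^ t := by
        simpa using hP
      rw [hcast]
      have hpow : Qzero n * Qzero n ^ t = Qzero n ^ (t + 1) := (pow_succ' _ _).symm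
      by_cases ha : a t
      · refine ⟨Vmat n 0 * Y, mul_mem (Submonoid.subset_closure ⟨0, by omega, rfl⟩) hY, ?_⟩
        simp only [Fin.val_last, ha, if_true, Qone_eq]
        rw [mul_assoc, ← mul_assoc (Qzero n), hQX, mul_assoc, mul_assoc, hpow, ← mul_assoc]
      · refine ⟨Y, hY, ?_⟩
        simp only [Fin.val_last, ha, Bool.false_eq_true, if_false]
        rw [← mul_assoc, hQX, mul_assoc, hpow]

theorem Qprod_same_HNF (n : ℕ) (hn : 2 ≤ n) (t : ℕ) (ht : 1 ≤ t) (a : ℕ → Bool) :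
    ∃ X : GL (Fin n) ℤ,
      (List.ofFn (fun i : Fin t => if a i.val then Qone n else Qzero n)).reverse.prod
        = (X : Matrix (Fin n) (Fin n) ℤ) * Qzero n ^ t := by
  obtain ⟨X, hX, hP⟩ := key_lemma n hn a t
  obtain ⟨u, hu⟩ := unit_lemma n hX
  exact ⟨u, by rw [hP, hu]⟩
end

section
/- A point p ∈ [0,1] is rational if and only if p is eventually mapped to 0 under iteration of the Farey map F. -/
lemma farey_rat (q : ℚ) :
    fareyMap (q : ℝ) = ((if q < 1/2 then q / (1 - q) else (1 - q) / q : ℚ) : ℝ) := by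
  rcases lt_or_ge q (1/2) with h | h
  · have h' : (q : ℝ) < 1/2 := by
      rw [show (1:ℝ)/2 = ((1/2 : ℚ) : ℝ) by norm_num]; exact_mod_cast h
    rw [fareyMap, if_pos h', if_pos h]; push_cast; ring
  · have h' : ¬ (q : ℝ) < 1/2 := by
      rw [not_lt, show (1:ℝ)/2 = ((1/2 : ℚ) : ℝ) by norm_num]; exact_mod_cast h
    rw [fareyMap, if_neg h', if_neg (not_lt.mpr h)]; push_cast; ring

lemma rat_eventually : ∀ n : ℕ, ∀ q : ℚ, q.den ≤ n → 0 ≤ q → q ≤ 1 →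
    ∃ k, fareyMap^[k] (q : ℝ) = 0 := by
  intro n
  induction n with
  | zero => intro q h _ _; exact absurd h (by have := q.pos; omega)
  | succ n ih =>
    intro q hden h0 h1
    rcases eq_or_lt_of_le h0 with h0' | h0'
    · exact ⟨0, by simp [← h0']⟩
    rcases eq_or_lt_of_le h1 with h1' | h1'
    · refine ⟨1, ?_⟩
      rw [h1']
      norm_num [fareyMap]
    set a := q.num with ha
    set b := (q.den : ℤ) with hb
    have hbpos : (0:ℤ) < b := by rw [hb]; exact_mod_cast q.pos
    have hbQ : (b : ℚ) ≠ 0 := by positivity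
    have hab : (q:ℚ) = (a : ℚ) / (b : ℚ) := by exact_mod_cast (Rat.num_div_den q).symm
    have hapos : 0 < a := Rat.num_pos.mpr h0'
    have haltb : a < b := by
      by_contra hc
      push_neg at hc
      have : (1:ℚ) ≤ q := by
        rw [hab]; rw [le_div_iff₀ (by exact_mod_cast hbpos)]
        simpa using (by exact_mod_cast hc : (b:ℚ) ≤ a)
      exact absurd h1' (not_lt.mpr this)
    rcases lt_or_ge q (1/2) with hq | hq
    · -- r = a/(b-a)
      set r : ℚ := q / (1 - q) with hr
      have h1q : (0:ℚ) < 1 - q := by linarith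
      have hreq : r = (a:ℚ) / ((b - a : ℤ) : ℚ) := by
        rw [hr, hab]
        have : ((b - a : ℤ) : ℚ) ≠ 0 := by
          have haQ : ((a:ℚ)) < (b:ℚ) := by exact_mod_cast haltb
          push_cast; intro hc; linarith
        field_simp
        push_cast at this ⊢; exact div_self this
      have hdvd : (r.den : ℤ) ∣ (b - a) := by
        rw [hreq, ← Rat.divInt_eq_div]
        exact Rat.den_dvd a (b - a)
      have hrden : r.den ≤ n := by
        have h1 : (r.den : ℤ) ≤ b - a := Int.le_of_dvd (by omega) hdvd
        omega
      have hr0 : 0 ≤ r := by positivity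
      have hr1 : r ≤ 1 := by
        rw [hr, div_le_one h1q]; linarith
      obtain ⟨k, hk⟩ := ih r hrden hr0 hr1
      refine ⟨k + 1, ?_⟩
      rw [Function.iterate_succ_apply, farey_rat, if_pos hq]
      exact hk
    · set r : ℚ := (1 - q) / q with hr
      have hreq : r = ((b - a : ℤ) : ℚ) / (a : ℚ) := by
        rw [hr, hab]
        have haQ : (a : ℚ) ≠ 0 := by
          exact_mod_cast hapos.ne'
        field_simp
        push_cast; ring
      have hdvd : (r.den : ℤ) ∣ a := by
        rw [hreq, ← Rat.divInt_eq_div]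
        exact Rat.den_dvd _ a
      have hrden : r.den ≤ n := by
        have h1 : (r.den : ℤ) ≤ a := Int.le_of_dvd hapos hdvd
        omega
      have hr0 : 0 ≤ r := by
        apply div_nonneg (by linarith) h0'.le
      have hr1 : r ≤ 1 := by
        rw [hr, div_le_one h0']; linarith
      obtain ⟨k, hk⟩ := ih r hrden hr0 hr1
      refine ⟨k + 1, ?_⟩
      rw [Function.iterate_succ_apply, farey_rat, if_neg (not_lt.mpr hq)]
      exact hk

lemma zero_rat : ∀ k : ℕ, ∀ p : ℝ, fareyMap^[k] p = 0 → ∃ q : ℚ, p = (q : ℝ) := by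
  intro k
  induction k with
  | zero => intro p hp; exact ⟨0, by simpa using hp⟩
  | succ k ih =>
    intro p hp
    rw [Function.iterate_succ_apply] at hp
    obtain ⟨q, hq⟩ := ih _ hp
    rcases lt_or_ge p (1/2) with h | h
    · rw [fareyMap, if_pos h] at hq
      have h1p : (1:ℝ) - p ≠ 0 := by linarith
      have hq1 : (1:ℚ) + q ≠ 0 := by
        intro hc
        have hc' : (q:ℝ) = -1 := by
          have := congrArg (Rat.cast (K := ℝ)) hc
          push_cast at this; linarith
        rw [hc'] at hq
        field_simp [h1p] at hq
        linarith
      refine ⟨q / (1 + q), ?_⟩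
      have hq1R : (1:ℝ) + (q:ℝ) ≠ 0 := by exact_mod_cast hq1
      push_cast
      field_simp at hq ⊢
      linarith
    · rw [fareyMap, if_neg (not_lt.mpr h)] at hq
      have hp0 : p ≠ 0 := by intro hc; rw [hc] at h; norm_num at h
      have hq1 : (q:ℝ) + 1 ≠ 0 := by
        intro hc
        have hc' : (q:ℝ) = -1 := by linarith
        rw [hc'] at hq
        field_simp [hp0] at hq
        linarith
      have hq1Q : (q:ℚ) + 1 ≠ 0 := by exact_mod_cast hq1
      refine ⟨1 / (q + 1), ?_⟩
      push_cast
      field_simp at hq ⊢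
      linarith

theorem rational_iff_eventually_zero_farey (p : ℝ) (hp : p ∈ Set.Icc (0:ℝ) 1) :
    (∃ q : ℚ, p = (q : ℝ)) ↔ ∃ k : ℕ, fareyMap^[k] p = 0 := by
  constructor
  · rintro ⟨q, rfl⟩
    have h0 : (0:ℚ) ≤ q := by exact_mod_cast hp.1
    have h1 : q ≤ 1 := by exact_mod_cast hp.2
    exact rat_eventually q.den q le_rfl h0 h1
  · rintro ⟨k, hk⟩
    exact zero_rat k p hk
end

section
/- If p ∈ [0,1] is preperiodic under the Farey map F (i.e., F^t(p) = F^s(p) for some 0 ≤ t < s), then p is an algebraic number of degree at most 2 over ℚ. -/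
/-- `x` satisfies a nontrivial quadratic equation with rational coefficients. -/
def QuadAlg (x : ℝ) : Prop :=
  ∃ α β γ : ℚ, ¬(α = 0 ∧ β = 0 ∧ γ = 0) ∧ (α : ℝ) * x ^ 2 + (β : ℝ) * x + (γ : ℝ) = 0

lemma fareyMap_mem (x : ℝ) (hx : x ∈ Set.Icc (0:ℝ) 1) : fareyMap x ∈ Set.Icc (0:ℝ) 1 := by
  obtain ⟨h0, h1⟩ := hx
  unfold fareyMap
  split_ifs with hlt
  · have hpos : (0:ℝ) < 1 - x := by linarith
    constructor
    · positivity
    · rw [div_le_one hpos]; linarith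
  · push_neg at hlt
    have hpos : (0:ℝ) < x := by linarith
    constructor
    · have : (0:ℝ) ≤ 1 - x := by linarith
      positivity
    · rw [div_le_one hpos]; linarith

lemma fareyMap_iter_mem (x : ℝ) (hx : x ∈ Set.Icc (0:ℝ) 1) (n : ℕ) :
    fareyMap^[n] x ∈ Set.Icc (0:ℝ) 1 := by
  induction n with
  | zero => simpa using hx
  | succ n ih =>
      rw [Function.iterate_succ_apply']
      exact fareyMap_mem _ ih

/-- pulling back a quadratic relation through one application of the Farey map -/
lemma quad_pull (x : ℝ) (h : QuadAlg (fareyMap x)) : QuadAlg x := by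
  obtain ⟨α, β, γ, hne, heq⟩ := h
  unfold fareyMap at heq
  split_ifs at heq with hlt
  · have hden : (1:ℝ) - x ≠ 0 := by
      intro h
      have : x = 1 := by linarith
      linarith
    refine ⟨α - β + γ, β - 2 * γ, γ, ?_, ?_⟩
    · rintro ⟨h1, h2, h3⟩
      exact hne ⟨by linarith, by linarith, h3⟩
    · have key : ((α - β + γ : ℚ) : ℝ) * x ^ 2 + ((β - 2 * γ : ℚ) : ℝ) * x + ((γ : ℚ) : ℝ)
          = (1 - x) ^ 2 * ((α : ℝ) * (x / (1 - x)) ^ 2 + (β : ℝ) * (x / (1 - x)) + (γ : ℝ)) := by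
        field_simp
        push_cast
        ring
      rw [key, heq, mul_zero]
  · have hx0 : x ≠ 0 := by
      push_neg at hlt
      intro h; rw [h] at hlt; norm_num at hlt
    refine ⟨α - β + γ, β - 2 * α, α, ?_, ?_⟩
    · rintro ⟨h1, h2, h3⟩
      exact hne ⟨h3, by linarith, by linarith⟩
    · have key : ((α - β + γ : ℚ) : ℝ) * x ^ 2 + ((β - 2 * α : ℚ) : ℝ) * x + ((α : ℚ) : ℝ)
          = x ^ 2 * ((α : ℝ) * ((1 - x) / x) ^ 2 + (β : ℝ) * ((1 - x) / x) + (γ : ℝ)) := by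
        field_simp
        push_cast
        ring
      rw [key, heq, mul_zero]

lemma quad_pull_iter (t : ℕ) : ∀ x : ℝ, QuadAlg (fareyMap^[t] x) → QuadAlg x := by
  induction t with
  | zero => intro x h; simpa using h
  | succ t ih =>
      intro x h
      rw [Function.iterate_succ_apply] at h
      exact quad_pull x (ih (fareyMap x) h)

/-- Möbius representation of the inverse branches of the iterated Farey map. -/
lemma rep (x : ℝ) (hx : x ∈ Set.Icc (0:ℝ) 1) (n : ℕ) :
    ∃ a b c d : ℤ, 0 ≤ a ∧ 0 ≤ b ∧ 0 ≤ c ∧ 0 ≤ d ∧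
      (a * d - b * c = 1 ∨ a * d - b * c = -1) ∧
      (1 ≤ n → ¬(a = 1 ∧ b = 0 ∧ c = 0 ∧ d = 1)) ∧
      0 < (c : ℝ) * (fareyMap^[n] x) + (d : ℝ) ∧
      x * ((c : ℝ) * (fareyMap^[n] x) + (d : ℝ)) = (a : ℝ) * (fareyMap^[n] x) + (b : ℝ) := by
  induction n with
  | zero =>
      refine ⟨1, 0, 0, 1, by norm_num, by norm_num, by norm_num, by norm_num,
        by norm_num, by omega, by norm_num, by norm_num⟩
  | succ n ih =>
      obtain ⟨a, b, c, d, ha, hb, hc, hd, hdet, _, hpos, heq⟩ := ih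
      set y := fareyMap^[n] x with hy
      have hymem : y ∈ Set.Icc (0:ℝ) 1 := fareyMap_iter_mem x hx n
      have hy'mem : fareyMap y ∈ Set.Icc (0:ℝ) 1 := fareyMap_mem y hymem
      have hiter : fareyMap^[n+1] x = fareyMap y := by
        rw [Function.iterate_succ_apply', hy]
      set y' := fareyMap y with hy'
      have hy'0 : (0:ℝ) ≤ y' := hy'mem.1
      have h1y' : (0:ℝ) < 1 + y' := by linarith
      by_cases hlt : y < 1/2
      · -- branch 1 : y' = y/(1-y), so y = y'/(1+y'), i.e. y*(1+y') = y'
        have hden : (0:ℝ) < 1 - y := by linarith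
        have hyv : y' = y / (1 - y) := by rw [hy']; unfold fareyMap; rw [if_pos hlt]
        have hkey : y * (1 + y') = y' := by
          rw [hyv]
          field_simp
          ring
        refine ⟨a + b, b, c + d, d, by omega, hb, by omega, hd, ?_, ?_, ?_, ?_⟩
        · rcases hdet with h | h
          · left; linarith
          · right; linarith
        · intro _ ⟨h1, h2, h3, h4⟩; omega
        · rw [hiter]
          have e1 : ((c:ℝ) + (d:ℝ)) * y' + (d:ℝ) = ((c:ℝ) * y + (d:ℝ)) * (1 + y') := by
            linear_combination (-(c:ℝ)) * hkey
          push_cast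
          rw [e1]
          positivity
        · rw [hiter]
          push_cast
          have e1 : ((c:ℝ) + (d:ℝ)) * y' + (d:ℝ) = ((c:ℝ) * y + (d:ℝ)) * (1 + y') := by
            linear_combination (-(c:ℝ)) * hkey
          have e2 : ((a:ℝ) + (b:ℝ)) * y' + (b:ℝ) = ((a:ℝ) * y + (b:ℝ)) * (1 + y') := by
            linear_combination (-(a:ℝ)) * hkey
          rw [e1, e2, ← mul_assoc, heq]
      · -- branch 2 : y' = (1-y)/y, so y = 1/(1+y'), i.e. y*(1+y') = 1
        push_neg at hlt
        have hypos : (0:ℝ) < y := by linarith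
        have hyv : y' = (1 - y) / y := by rw [hy']; unfold fareyMap; rw [if_neg (by linarith)]
        have hkey : y * (1 + y') = 1 := by
          rw [hyv]
          field_simp
          ring
        refine ⟨b, a + b, d, c + d, hb, by omega, hd, by omega, ?_, ?_, ?_, ?_⟩
        · rcases hdet with h | h
          · right; linarith
          · left; linarith
        · intro _ ⟨h1, h2, h3, h4⟩; omega
        · rw [hiter]
          have e1 : (d:ℝ) * y' + ((c:ℝ) + (d:ℝ)) = ((c:ℝ) * y + (d:ℝ)) * (1 + y') := by
            linear_combination (-(c:ℝ)) * hkey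
          push_cast
          rw [e1]
          positivity
        · rw [hiter]
          push_cast
          have e1 : (d:ℝ) * y' + ((c:ℝ) + (d:ℝ)) = ((c:ℝ) * y + (d:ℝ)) * (1 + y') := by
            linear_combination (-(c:ℝ)) * hkey
          have e2 : (b:ℝ) * y' + ((a:ℝ) + (b:ℝ)) = ((a:ℝ) * y + (b:ℝ)) * (1 + y') := by
            linear_combination (-(a:ℝ)) * hkey
          rw [e1, e2, ← mul_assoc, heq]

lemma periodic_quad (y : ℝ) (hy : y ∈ Set.Icc (0:ℝ) 1) (k : ℕ) (hk : 1 ≤ k)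
    (hper : fareyMap^[k] y = y) : QuadAlg y := by
  obtain ⟨a, b, c, d, ha, hb, hc, hd, hdet, hni, hpos, heq⟩ := rep y hy k
  rw [hper] at heq
  refine ⟨(c : ℚ), ((d : ℚ) - (a : ℚ)), (-(b : ℚ)), ?_, ?_⟩
  · rintro ⟨h1, h2, h3⟩
    have hc0 : c = 0 := by exact_mod_cast h1
    have hda : d = a := by
      have : (d : ℚ) = (a : ℚ) := by linarith
      exact_mod_cast this
    have hb0 : b = 0 := by
      have : (b : ℚ) = 0 := by linarith
      exact_mod_cast this
    apply hni hk
    rw [hc0, hb0, hda] at hdet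
    have hdet' : a * a = 1 ∨ a * a = -1 := by
      rcases hdet with h | h
      · left; linarith
      · right; linarith
    have ha1 : a = 1 := by
      have hne0 : a ≠ 0 := by
        rintro rfl
        rcases hdet' with h | h <;> omega
      have hge : 1 ≤ a := by omega
      have hle : a ≤ 1 := by
        rcases hdet' with h | h
        · nlinarith [mul_self_nonneg (a - 1)]
        · nlinarith [mul_self_nonneg a]
      omega
    exact ⟨ha1, hb0, hc0, by omega⟩
  · push_cast
    linear_combination heq

theorem farey_preperiodic_is_quadratic (p : ℝ) (hp : p ∈ Set.Icc (0:ℝ) 1)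
    (h : ∃ t s : ℕ, t < s ∧ fareyMap^[t] p = fareyMap^[s] p) :
    ∃ q : Polynomial ℚ, q ≠ 0 ∧ q.degree ≤ 2 ∧ Polynomial.aeval p q = 0 := by
  obtain ⟨t, s, hts, hper⟩ := h
  set y := fareyMap^[t] p with hy
  have hymem : y ∈ Set.Icc (0:ℝ) 1 := fareyMap_iter_mem p hp t
  have hkper : fareyMap^[s - t] y = y := by
    rw [hy, ← Function.iterate_add_apply, Nat.sub_add_cancel (le_of_lt hts), ← hper]
  have hquad : QuadAlg p := by
    apply quad_pull_iter t
    exact periodic_quad y hymem (s - t) (by omega) hkper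
  obtain ⟨α, β, γ, hne, heq⟩ := hquad
  refine ⟨Polynomial.C α * Polynomial.X ^ 2 + Polynomial.C β * Polynomial.X + Polynomial.C γ,
    ?_, ?_, ?_⟩
  · intro h0
    apply hne
    refine ⟨?_, ?_, ?_⟩
    · have := congrArg (fun q => Polynomial.coeff q 2) h0
      simpa using this
    · have := congrArg (fun q => Polynomial.coeff q 1) h0
      simpa using this
    · have := congrArg (fun q => Polynomial.coeff q 0) h0
      simpa using this
  · compute_degree
  · simp only [map_add, map_mul, map_pow, Polynomial.aeval_C, Polynomial.aeval_X]
    simpa using heq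
end
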